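/- Let n ≥ 5 be an integer, p = (n+2)/(n−2), and Q(y) = (1 + |y|²/(n(n−2)))^{−(n−2)/2}. There exists a constant m₁ > 1, depending only on n, such that for every y ∈ ℝⁿ with |y| > m₁: (i) −Δ(|y|^{−2}) − pQ(y)^{p−1}|y|^{−2} > (n−4)|y|^{−4}, and (ii) −Δ(|y|^{−(n−4)}) − pQ(y)^{p−1}|y|^{−(n−4)} > (n−4)|y|^{−(n−2)}. -/

import Mathlib

/-- The Laplacian of `f : ℝⁿ → ℝ` at `x`: the sum of the second partial derivatives
`∂²f/∂xᵢ²` in the coordinate directions. -/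
noncomputable def laplacian {n : ℕ} (f : EuclideanSpace ℝ (Fin n) → ℝ)
    (x : EuclideanSpace ℝ (Fin n)) : ℝ :=
  ∑ i : Fin n,
    fderiv ℝ (fun y => fderiv ℝ f y (EuclideanSpace.single i 1)) x (EuclideanSpace.single i 1)

lemma sq_rpow {n : ℕ} (x : EuclideanSpace ℝ (Fin n)) (b : ℝ) :
    ((‖x‖ : ℝ) ^ 2) ^ b = ‖x‖ ^ (2 * b) := by
  rw [← Real.rpow_natCast ‖x‖ 2, ← Real.rpow_mul (norm_nonneg x)]
  norm_num

lemma hasFDerivAt_normsq_rpow {n : ℕ} (b : ℝ) {x : EuclideanSpace ℝ (Fin n)} (hx : x ≠ 0) :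
    HasFDerivAt (fun z : EuclideanSpace ℝ (Fin n) => ((‖z‖ : ℝ) ^ 2) ^ b)
      ((b * ((‖x‖ : ℝ) ^ 2) ^ (b - 1)) • (2 • innerSL ℝ x)) x :=
  (hasStrictFDerivAt_norm_sq x).hasFDerivAt.rpow_const
    (Or.inl (pow_ne_zero 2 (norm_ne_zero_iff.mpr hx)))

lemma fderiv_normsq_rpow_single {n : ℕ} (b : ℝ) {x : EuclideanSpace ℝ (Fin n)} (hx : x ≠ 0)
    (i : Fin n) :
    fderiv ℝ (fun z : EuclideanSpace ℝ (Fin n) => ((‖z‖ : ℝ) ^ 2) ^ b) x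
        (EuclideanSpace.single i 1)
      = 2 * b * ((‖x‖ : ℝ) ^ 2) ^ (b - 1) * x i := by
  rw [(hasFDerivAt_normsq_rpow b hx).fderiv]
  simp [real_inner_comm, EuclideanSpace.inner_single_left, EuclideanSpace.inner_single_right]
  ring

lemma laplacian_rpow {n : ℕ} (a : ℝ) (ha : a ≠ 0) {y : EuclideanSpace ℝ (Fin n)} (hy : y ≠ 0) :
    laplacian (fun x => ‖x‖ ^ a) y = a * (a + n - 2) * ‖y‖ ^ (a - 2) := by
  have hfun : (fun x : EuclideanSpace ℝ (Fin n) => ‖x‖ ^ a)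
      = fun x => ((‖x‖ : ℝ) ^ 2) ^ (a / 2) := by
    funext x
    rw [sq_rpow]
    congr 1
    ring
  have h0 : ‖y‖ ≠ 0 := norm_ne_zero_iff.mpr hy
  have hny : (0 : ℝ) < ‖y‖ ^ 2 := by positivity
  have key : ∀ i : Fin n,
      fderiv ℝ (fun x => fderiv ℝ (fun z : EuclideanSpace ℝ (Fin n) => ((‖z‖ : ℝ) ^ 2) ^ (a / 2))
          x (EuclideanSpace.single i 1)) y (EuclideanSpace.single i 1)
        = a * ((a / 2 - 1) * ((‖y‖ : ℝ) ^ 2) ^ (a / 2 - 1 - 1) * (2 * (y i * y i))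
            + ((‖y‖ : ℝ) ^ 2) ^ (a / 2 - 1)) := by
    intro i
    have hEq : (fun x : EuclideanSpace ℝ (Fin n) =>
        fderiv ℝ (fun z : EuclideanSpace ℝ (Fin n) => ((‖z‖ : ℝ) ^ 2) ^ (a / 2)) x
          (EuclideanSpace.single i 1))
        =ᶠ[nhds y] fun x => a * (((‖x‖ : ℝ) ^ 2) ^ (a / 2 - 1) * x i) := by
      filter_upwards [eventually_ne_nhds hy] with x hx
      rw [fderiv_normsq_rpow_single _ hx]
      ring
    rw [hEq.fderiv_eq]
    have h1 : HasFDerivAt (fun z : EuclideanSpace ℝ (Fin n) => ((‖z‖ : ℝ) ^ 2) ^ (a / 2 - 1))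
        (((a / 2 - 1) * ((‖y‖ : ℝ) ^ 2) ^ (a / 2 - 1 - 1)) • (2 • innerSL ℝ y)) y :=
      hasFDerivAt_normsq_rpow _ hy
    have h2 : HasFDerivAt (fun z : EuclideanSpace ℝ (Fin n) => z i)
        (EuclideanSpace.proj i : EuclideanSpace ℝ (Fin n) →L[ℝ] ℝ) y :=
      (EuclideanSpace.proj i : EuclideanSpace ℝ (Fin n) →L[ℝ] ℝ).hasFDerivAt
    have h3 := (h1.mul h2).const_mul a
    rw [HasFDerivAt.fderiv (f := fun x : EuclideanSpace ℝ (Fin n) =>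
      a * ((‖x‖ ^ 2) ^ (a / 2 - 1) * x i)) h3]
    simp [real_inner_comm, EuclideanSpace.inner_single_left, EuclideanSpace.inner_single_right]
    ring
  unfold laplacian
  rw [hfun]
  rw [Finset.sum_congr rfl fun i _ => key i]
  have hsum : ∑ i : Fin n, y i * y i = ‖y‖ ^ 2 := by
    rw [EuclideanSpace.norm_eq, Real.sq_sqrt (by positivity)]
    simp [sq]
  have hterm : ∀ i : Fin n,
      a * ((a / 2 - 1) * ((‖y‖ : ℝ) ^ 2) ^ (a / 2 - 1 - 1) * (2 * (y i * y i))
          + ((‖y‖ : ℝ) ^ 2) ^ (a / 2 - 1))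
        = (2 * a * (a / 2 - 1) * ((‖y‖ : ℝ) ^ 2) ^ (a / 2 - 1 - 1)) * (y i * y i)
          + a * ((‖y‖ : ℝ) ^ 2) ^ (a / 2 - 1) := fun i => by ring
  rw [Finset.sum_congr rfl fun i _ => hterm i, Finset.sum_add_distrib, ← Finset.mul_sum, hsum,
    Finset.sum_const, Finset.card_univ, Fintype.card_fin, nsmul_eq_mul]
  have hpow : ((‖y‖ : ℝ) ^ 2) ^ (a / 2 - 1 - 1) * (‖y‖ : ℝ) ^ 2 = ((‖y‖ : ℝ) ^ 2) ^ (a / 2 - 1) := by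
    rw [← Real.rpow_add_one (ne_of_gt hny)]
    congr 1
    ring
  rw [show a - 2 = 2 * (a / 2 - 1) by ring, ← sq_rpow]
  linear_combination (2 * a * (a / 2 - 1)) * hpow

set_option maxHeartbeats 1600000 in
/-- For `n ≥ 5` there is a constant `m₁ > 1`, depending only on `n`,
such that for `|y| > m₁`:
(i) `−Δ(|y|^{−2}) − pQ(y)^{p−1}|y|^{−2} > (n−4)|y|^{−4}`, and
(ii) `−Δ(|y|^{−(n−4)}) − pQ(y)^{p−1}|y|^{−(n−4)} > (n−4)|y|^{−(n−2)}`,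
where `p = (n+2)/(n−2)` and `Q` is the Talenti function. -/
theorem comparison_function_constant (n : ℕ) (hn : 5 ≤ n) (p : ℝ)
    (hp : p = ((n : ℝ) + 2) / ((n : ℝ) - 2))
    (Q : EuclideanSpace ℝ (Fin n) → ℝ)
    (hQ : ∀ y, Q y = (1 + ‖y‖ ^ 2 / ((n : ℝ) * ((n : ℝ) - 2))) ^ (-(((n : ℝ) - 2) / 2))) :
    ∃ m₁ : ℝ, 1 < m₁ ∧
      ∀ y : EuclideanSpace ℝ (Fin n), m₁ < ‖y‖ →
        (-laplacian (fun x => ‖x‖ ^ (-2 : ℝ)) y - p * Q y ^ (p - 1) * ‖y‖ ^ (-2 : ℝ)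
            > ((n : ℝ) - 4) * ‖y‖ ^ (-4 : ℝ)) ∧
        (-laplacian (fun x => ‖x‖ ^ (-((n : ℝ) - 4))) y
            - p * Q y ^ (p - 1) * ‖y‖ ^ (-((n : ℝ) - 4))
            > ((n : ℝ) - 4) * ‖y‖ ^ (-((n : ℝ) - 2))) := by
  have hn5 : (5 : ℝ) ≤ (n : ℝ) := by exact_mod_cast hn
  have hc : (0 : ℝ) < (n : ℝ) * ((n : ℝ) - 2) := by nlinarith
  set c : ℝ := (n : ℝ) * ((n : ℝ) - 2) with hc_def
  have hn4 : (0 : ℝ) < (n : ℝ) - 4 := by linarith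
  have hp0 : 0 < p := by
    rw [hp]; exact div_pos (by linarith) (by linarith)
  have hm0 : 0 < p * c ^ 2 / ((n : ℝ) - 4) := div_pos (by positivity) hn4
  refine ⟨1 + p * c ^ 2 / ((n : ℝ) - 4), by linarith, ?_⟩
  intro y hy
  set r : ℝ := ‖y‖ with hr_def
  have hr1 : (1 : ℝ) < r := by
    have : (0 : ℝ) ≤ p * c ^ 2 / ((n : ℝ) - 4) := by positivity
    linarith
  have hr0 : (0 : ℝ) < r := by linarith
  have hy0 : y ≠ 0 := by
    intro h; rw [hr_def, h, norm_zero] at hr1; linarith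
  -- key estimate : p * Q y ^ (p - 1) < (n - 4) * r ^ (-2 : ℝ)
  set t : ℝ := 1 + r ^ 2 / c with ht_def
  have ht0 : (0 : ℝ) < t := by positivity
  have hQp : Q y ^ (p - 1) = t ^ (-2 : ℝ) := by
    rw [hQ, ← ht_def, ← Real.rpow_mul ht0.le]
    congr 1
    have h2 : (n : ℝ) - 2 ≠ 0 := by linarith
    rw [hp]
    field_simp
    ring
  have hA : p * c ^ 2 < ((n : ℝ) - 4) * r ^ 2 := by
    have h1 : ((n : ℝ) - 4) * (1 + p * c ^ 2 / ((n : ℝ) - 4)) = ((n : ℝ) - 4) + p * c ^ 2 := by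
      field_simp
    nlinarith [mul_lt_mul_of_pos_left hy hn4, mul_pos (sub_pos.mpr hr1) hr0]
  have hcross : p * r ^ 2 < ((n : ℝ) - 4) * t ^ 2 := by
    have hct : t * c = c + r ^ 2 := by rw [ht_def, add_mul, div_mul_cancel₀ _ hc.ne', one_mul]
    have h2 : p * c ^ 2 * r ^ 2 < ((n : ℝ) - 4) * r ^ 2 * r ^ 2 :=
      mul_lt_mul_of_pos_right hA (by positivity)
    have hct2 : (t * c) ^ 2 = (c + r ^ 2) ^ 2 := by rw [hct]
    have h3 : p * r ^ 2 * c ^ 2 < ((n : ℝ) - 4) * t ^ 2 * c ^ 2 := by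
      nlinarith [h2, hct2, mul_nonneg hn4.le (sq_nonneg c),
        mul_nonneg (mul_nonneg hn4.le hc.le) (sq_nonneg r)]
    have hc2 : (0 : ℝ) < c ^ 2 := by positivity
    exact lt_of_mul_lt_mul_right h3 hc2.le
  have hkey : p * Q y ^ (p - 1) < ((n : ℝ) - 4) * r ^ (-2 : ℝ) := by
    rw [hQp, Real.rpow_neg ht0.le, Real.rpow_neg hr0.le, Real.rpow_two, Real.rpow_two,
      ← div_eq_mul_inv, ← div_eq_mul_inv, div_lt_div_iff₀ (by positivity) (by positivity)]
    nlinarith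
  have hrnz : r ≠ 0 := ne_of_gt hr0
  constructor
  · rw [laplacian_rpow (-2 : ℝ) (by norm_num) hy0, ← hr_def]
    have e1 : r ^ ((-2 : ℝ) - 2) = r ^ (-4 : ℝ) := by norm_num
    have e2 : r ^ (-2 : ℝ) * r ^ (-2 : ℝ) = r ^ (-4 : ℝ) := by
      rw [← Real.rpow_add hr0]; norm_num
    have hr2 : (0 : ℝ) < r ^ (-2 : ℝ) := Real.rpow_pos_of_pos hr0 _
    have hmul := mul_lt_mul_of_pos_right hkey hr2
    rw [e1]
    nlinarith [hmul, e2]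
  · rw [laplacian_rpow (-((n : ℝ) - 4)) (ne_of_lt (by linarith : -((n : ℝ) - 4) < 0)) hy0, ← hr_def]
    have e1 : r ^ (-((n : ℝ) - 4) - 2) = r ^ (-((n : ℝ) - 2)) := by congr 1; ring
    have e2 : r ^ (-2 : ℝ) * r ^ (-((n : ℝ) - 4)) = r ^ (-((n : ℝ) - 2)) := by
      rw [← Real.rpow_add hr0]; congr 1; ring
    have hra : (0 : ℝ) < r ^ (-((n : ℝ) - 4)) := Real.rpow_pos_of_pos hr0 _
    have hmul := mul_lt_mul_of_pos_right hkey hra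
    rw [e1]
    nlinarith [hmul, e2]
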